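/- Let G be a profinite group isomorphic to the profinite completion of the integers (e.g. Gal(Q_ℓ^ur/Q_ℓ)), and M a finite discrete G-module. Then H^2(G, M) = 0. -/

import Mathlib

open scoped Pointwise

instance (p : Nat.Primes) : Fact (p : ℕ).Prime := ⟨p.2⟩


theorem core_lemma
    {G : Type*} [Group G] [TopologicalSpace G] [IsTopologicalGroup G]
    {M : Type*} [AddCommGroup M] [TopologicalSpace M] [ContinuousAdd M]
    [DistribMulAction G M] (hact : Continuous fun q : G × M => q.1 • q.2)
    (hcomm : ∀ a b : G, a * b = b * a)
    (f : G → G → M)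
    (hcocycle : ∀ σ τ υ : G, σ • f τ υ - f (σ * τ) υ + f σ (τ * υ) - f σ τ = 0)
    (σ : G) (n E : ℕ)
    (hEM : ∀ m : M, E • m = 0)
    (K₀ K : Set G)
    (hK₀f : ∀ x y u v : G, u ∈ K₀ → v ∈ K₀ → f (x * u) (y * v) = f x y)
    (hK₀act : ∀ u ∈ K₀, ∀ m : M, u • m = m)
    (hσn : σ ^ n ∈ K₀)
    (hKK₀ : K ⊆ K₀)
    (hK1 : (1 : G) ∈ K) (hKmul : ∀ a b : G, a ∈ K → b ∈ K → a * b ∈ K)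
    (hKinv : ∀ a : G, a ∈ K → a⁻¹ ∈ K)
    (hKdiv : ∀ i : ℤ, σ ^ i ∈ K → ((n * E : ℕ) : ℤ) ∣ i)
    (hKopen : IsOpen K)
    (r : G → ℕ) (hr : ∀ x : G, (σ ^ r x)⁻¹ * x ∈ K) :
    ∃ g : G → M, Continuous g ∧ ∀ x y : G, f x y = x • g y - g (x * y) + g x := by
  classical
  set c : M := f 1 1 with hc
  set f₁ : G → G → M := fun x y => f x y - x • c with hf₁
  -- basic normalization facts
  have hf_right : ∀ x : G, f x 1 = x • c := by
    intro x
    have h := hcocycle x 1 1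
    rw [mul_one, mul_one] at h
    have h2 : x • c - f x 1 = 0 := by rw [← h]; abel
    exact (sub_eq_zero.mp h2).symm
  have hf_left : ∀ y : G, f 1 y = c := by
    intro y
    have h := hcocycle 1 1 y
    rw [one_mul, one_mul, one_smul] at h
    have h2 : f 1 y - c = 0 := by rw [← h]; abel
    exact sub_eq_zero.mp h2
  have hf₁_right : ∀ x : G, f₁ x 1 = 0 := by
    intro x; simp only [hf₁, hf_right, sub_self]
  have hcoc1 : ∀ x y z : G, x • f₁ y z - f₁ (x * y) z + f₁ x (y * z) - f₁ x y = 0 := by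
    intro x y z
    have h := hcocycle x y z
    have e1 : x • f₁ y z - f₁ (x * y) z + f₁ x (y * z) - f₁ x y
        = x • f y z - f (x * y) z + f x (y * z) - f x y := by
      simp only [hf₁, smul_sub, smul_smul]
      abel
    rw [e1, h]
  -- invariance of f₁ under K₀
  have hK₀act' : ∀ x u : G, u ∈ K₀ → ∀ m : M, (x * u) • m = x • m := by
    intro x u hu m
    rw [mul_smul, hK₀act u hu]
  have hK₀f1 : ∀ x y u v : G, u ∈ K₀ → v ∈ K₀ → f₁ (x * u) (y * v) = f₁ x y := by
    intro x y u v hu hv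
    simp only [hf₁, hK₀f x y u v hu hv, hK₀act' x u hu]
  have h1K₀ : (1 : G) ∈ K₀ := hKK₀ hK1
  -- the 1-cochain on powers of σ
  set h : ℕ → M := fun j => Nat.rec (0 : M) (fun j hj => hj - f₁ (σ ^ j) σ) j with hh
  have hzero : h 0 = 0 := rfl
  have hsucc : ∀ j : ℕ, h (j + 1) = h j - f₁ (σ ^ j) σ := fun j => rfl
  -- main cocycle computation
  have hC : ∀ j i : ℕ, f₁ (σ ^ i) (σ ^ j) = σ ^ i • h j - h (i + j) + h i := by
    intro j
    induction j with
    | zero =>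
      intro i
      simp only [pow_zero, hf₁_right, hzero, Nat.add_zero, smul_zero]
      abel
    | succ j ih =>
      intro i
      have hco := hcoc1 (σ ^ i) (σ ^ j) σ
      rw [← pow_add, ← pow_succ σ j] at hco
      -- hco : σ^i • f₁ (σ^j) σ - f₁ (σ^(i+j)) σ + f₁ (σ^i) (σ^(j+1)) - f₁ (σ^i) (σ^j) = 0
      have h1 : f₁ (σ ^ j) σ = h j - h (j + 1) := by rw [hsucc]; abel
      have h2 : f₁ (σ ^ (i + j)) σ = h (i + j) - h (i + j + 1) := by rw [hsucc]; abel
      have h3 : f₁ (σ ^ i) (σ ^ (j + 1)) =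
          f₁ (σ ^ i) (σ ^ j) - σ ^ i • f₁ (σ ^ j) σ + f₁ (σ ^ (i + j)) σ := by
        have : f₁ (σ ^ i) (σ ^ (j + 1)) - (f₁ (σ ^ i) (σ ^ j) - σ ^ i • f₁ (σ ^ j) σ
            + f₁ (σ ^ (i + j)) σ) = 0 := by rw [← hco]; abel
        exact sub_eq_zero.mp this
      rw [h3, ih i, h1, h2, smul_sub]
      have : i + (j + 1) = i + j + 1 := by omega
      rw [this]
      abel
  -- periodicity
  have hD : ∀ j : ℕ, h (j + n) = h j + h n := by
    intro j
    induction j with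
    | zero => rw [hzero, Nat.zero_add, zero_add]
    | succ j ih =>
      have e1 : j + 1 + n = (j + n) + 1 := by omega
      rw [e1, hsucc, hsucc, ih]
      have e2 : f₁ (σ ^ (j + n)) σ = f₁ (σ ^ j) σ := by
        rw [pow_add]
        have := hK₀f1 (σ ^ j) σ (σ ^ n) 1 hσn h1K₀
        rw [mul_one] at this
        exact this
      rw [e2]
      abel
  have hDm : ∀ m j : ℕ, h (j + n * m) = h j + m • h n := by
    intro m
    induction m with
    | zero => intro j; simp
    | succ m ih =>
      intro j
      have e1 : j + n * (m + 1) = (j + n * m) + n := by ring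
      rw [e1, hD, ih, succ_nsmul]
      abel
  have hper : ∀ j k : ℕ, j ≡ k [MOD n * E] → h j = h k := by
    have H : ∀ j k : ℕ, j ≤ k → j ≡ k [MOD n * E] → h j = h k := by
      intro j k hle hjk
      obtain ⟨t, ht⟩ := (Nat.modEq_iff_dvd' hle).mp hjk
      have hk : k = j + n * (E * t) := by
        have : k = j + (n * E) * t := by omega
        rw [this]; ring
      rw [hk, hDm, show E * t = t * E from mul_comm E t, mul_smul, hEM, smul_zero, add_zero]
    intro j k hjk
    rcases le_total j k with h' | h'
    · exact H j k h' hjk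
    · exact (H k j h' hjk.symm).symm
  -- commutativity helpers
  have conj : ∀ g x : G, g * x * g⁻¹ = x := fun g x => by
    rw [hcomm g x, mul_inv_cancel_right]
  have hpow_mem : ∀ (a b : ℕ) (w z : G), w ∈ K → z ∈ K → σ ^ a * w = σ ^ b * z →
      a ≡ b [MOD n * E] := by
    intro a b w z hw hz heq
    have h1 : σ ^ a = σ ^ b * z * w⁻¹ := by
      rw [← heq, mul_inv_cancel_right]
    have key : σ ^ ((a : ℤ) - (b : ℤ)) = z * w⁻¹ := by
      rw [zpow_sub, zpow_natCast, zpow_natCast, h1, mul_assoc (σ ^ b) z w⁻¹]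
      exact conj _ _
    have hmem : σ ^ ((a : ℤ) - (b : ℤ)) ∈ K := by
      rw [key]; exact hKmul z w⁻¹ hz (hKinv w hw)
    have hdvd := hKdiv _ hmem
    have hdvd' : ((n * E : ℕ) : ℤ) ∣ (b : ℤ) - (a : ℤ) := by
      rw [show (b : ℤ) - a = -((a : ℤ) - b) by ring]
      exact dvd_neg.mpr hdvd
    exact (Nat.modEq_iff_dvd).mpr hdvd'
  have hrmul : ∀ x y : G, r (x * y) ≡ r x + r y [MOD n * E] := by
    intro x y
    have hw := hr (x * y)
    have hu := hr x
    have hv := hr y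
    apply hpow_mem (r (x * y)) (r x + r y) _ _ hw (hKmul _ _ hu hv)
    rw [mul_inv_cancel_left, pow_add, mul_assoc (σ ^ r x) (σ ^ r y) _,
      ← mul_assoc (σ ^ r y) _ _, hcomm (σ ^ r y) ((σ ^ r x)⁻¹ * x),
      mul_assoc ((σ ^ r x)⁻¹ * x) _ _, ← mul_assoc (σ ^ r x) _ _,
      mul_inv_cancel_left, mul_inv_cancel_left]
  have hrmulK : ∀ x u : G, u ∈ K → r (x * u) ≡ r x [MOD n * E] := by
    intro x u hu
    apply hpow_mem (r (x * u)) (r x) _ (((σ ^ r x)⁻¹ * x) * u) (hr (x * u))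
      (hKmul _ _ (hr x) hu)
    rw [mul_inv_cancel_left, ← mul_assoc, mul_inv_cancel_left]
  have hxσ : ∀ (x : G) (m : M), x • m = σ ^ r x • m := by
    intro x m
    conv_lhs => rw [show x = σ ^ r x * ((σ ^ r x)⁻¹ * x) from (mul_inv_cancel_left _ _).symm]
    rw [hK₀act' _ _ (hKK₀ (hr x))]
  have hfr : ∀ x y : G, f₁ x y = f₁ (σ ^ r x) (σ ^ r y) := by
    intro x y
    conv_lhs => rw [show x = σ ^ r x * ((σ ^ r x)⁻¹ * x) from (mul_inv_cancel_left _ _).symm,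
      show y = σ ^ r y * ((σ ^ r y)⁻¹ * y) from (mul_inv_cancel_left _ _).symm]
    exact hK₀f1 _ _ _ _ (hKK₀ (hr x)) (hKK₀ (hr y))
  -- continuity
  have hcont1 : Continuous fun x : G => x • c := hact.comp (continuous_id.prodMk continuous_const)
  have hcont2 : Continuous fun x : G => h (r x) := by
    have hlc : IsLocallyConstant fun x : G => h (r x) := by
      intro s
      rw [isOpen_iff_forall_mem_open]
      intro x hx
      refine ⟨x • K, ?_, hKopen.leftCoset x, ⟨1, hK1, mul_one x⟩⟩
      rintro - ⟨u, hu, rfl⟩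
      show h (r (x * u)) ∈ s
      rwa [hper _ _ (hrmulK x u hu)]
    exact hlc.continuous
  refine ⟨fun x => h (r x) + x • c, hcont2.add hcont1, ?_⟩
  intro x y
  have e1 : f x y = f₁ x y + x • c := by simp [hf₁]
  have e2 := hC (r y) (r x)
  have e3 : h (r (x * y)) = h (r x + r y) := hper _ _ (hrmul x y)
  have e4 : x • (h (r y) + y • c) = σ ^ r x • h (r y) + (x * y) • c := by
    rw [smul_add, hxσ x (h (r y)), smul_smul]
  show f x y = x • (h (r y) + y • c) - (h (r (x * y)) + (x * y) • c) + (h (r x) + x • c)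
  rw [e1, hfr x y, e2, e3, e4]
  abel


/-- The set of elements of `ℤ_p` divisible by `p^m` is open. -/
theorem dvd_pow_isOpen (p : ℕ) [hp : Fact p.Prime] (m : ℕ) :
    IsOpen {t : ℤ_[p] | (p : ℤ_[p]) ^ m ∣ t} := by
  have : {t : ℤ_[p] | (p : ℤ_[p]) ^ m ∣ t} = Metric.ball 0 ((p : ℝ) ^ (-(m : ℤ) + 1)) := by
    ext t
    simp only [Set.mem_setOf_eq, Metric.mem_ball, dist_eq_norm, sub_zero]
    rw [← Ideal.mem_span_singleton, ← PadicInt.norm_le_pow_iff_mem_span_pow,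
      PadicInt.norm_le_pow_iff_norm_lt_pow_add_one]
  rw [this]
  exact Metric.isOpen_ball

/-- Divisibility of an integer by `p^m` inside `ℤ_p` is the same as in `ℤ`. -/
theorem dvd_pow_int_iff (p : ℕ) [hp : Fact p.Prime] (m : ℕ) (i : ℤ) :
    (p : ℤ_[p]) ^ m ∣ (i : ℤ_[p]) ↔ ((p : ℤ) ^ m ∣ i) :=
  PadicInt.pow_p_dvd_int_iff m i

/-- Chinese remainder theorem style approximation: an adele in `∏ ℤ_p` can be
simultaneously approximated by a single natural number at finitely many primes. -/
theorem crt_approx (s : Finset Nat.Primes) (m : Nat.Primes → ℕ)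
    (z : ∀ p : Nat.Primes, ℤ_[(p : ℕ)]) :
    ∃ i : ℕ, ∀ p ∈ s, ((p : ℕ) : ℤ_[(p : ℕ)]) ^ m p ∣ (z p - (i : ℤ_[(p : ℕ)])) := by
  classical
  induction s using Finset.induction with
  | empty => exact ⟨0, fun p hp => absurd hp (Finset.notMem_empty p)⟩
  | @insert q s hq ih =>
    obtain ⟨i, hi⟩ := ih
    set Q : ℕ := (q : ℕ) ^ m q with hQ
    set P : ℕ := ∏ p ∈ s, (p : ℕ) ^ m p with hP
    have hcop : Nat.Coprime P Q := by
      apply Nat.Coprime.prod_left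
      intro p hp
      apply Nat.Coprime.pow
      rw [Nat.coprime_primes p.2 q.2]
      intro hpq
      exact hq (by rwa [show p = q from Subtype.ext hpq] at hp)
    haveI : NeZero Q := ⟨(pow_pos q.2.pos _).ne'⟩
    set α : ZMod Q := PadicInt.toZModPow (m q) (z q) with hα
    set u : (ZMod Q)ˣ := ZMod.unitOfCoprime P hcop with hu
    set t : ℕ := ((α - (i : ZMod Q)) * ((u⁻¹ : (ZMod Q)ˣ) : ZMod Q)).val with ht
    refine ⟨i + t * P, ?_⟩
    intro p hp
    rcases Finset.mem_insert.mp hp with rfl | hps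
    · -- the new prime
      have hPu : ((P : ℕ) : ZMod Q) = (u : ZMod Q) := (ZMod.coe_unitOfCoprime P hcop).symm
      have hcast : ((i + t * P : ℕ) : ZMod Q) = α := by
        push_cast
        rw [ht, ZMod.natCast_val, ZMod.cast_id, hPu, mul_assoc, ← Units.val_mul,
          inv_mul_cancel, Units.val_one, mul_one, add_sub_cancel]
      have hker : PadicInt.toZModPow (m p) (z p - ((i + t * P : ℕ) : ℤ_[(p : ℕ)])) = 0 := by
        rw [map_sub, map_natCast, hcast, sub_self]
      have hmem : z p - ((i + t * P : ℕ) : ℤ_[(p : ℕ)]) ∈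
          RingHom.ker (PadicInt.toZModPow (p := (p : ℕ)) (m p)) := hker
      rw [PadicInt.ker_toZModPow, Ideal.mem_span_singleton] at hmem
      exact hmem
    · have h1 := hi p hps
      have h2 : ((p : ℕ) : ℤ_[(p : ℕ)]) ^ m p ∣ ((t * P : ℕ) : ℤ_[(p : ℕ)]) := by
        have hnat : (p : ℕ) ^ m p ∣ t * P :=
          Dvd.dvd.mul_left (Finset.dvd_prod_of_mem (fun p : Nat.Primes => (p : ℕ) ^ m p) hps) t
        have := map_dvd (Nat.castRingHom ℤ_[(p : ℕ)]) hnat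
        simpa using this
      have e1 : z p - ((i + t * P : ℕ) : ℤ_[(p : ℕ)])
          = (z p - (i : ℤ_[(p : ℕ)])) - ((t * P : ℕ) : ℤ_[(p : ℕ)]) := by
        push_cast
        ring
      rw [e1]
      exact dvd_sub h1 h2

/-- Let `G` be a profinite group isomorphic (as a topological group) to the profinite
completion `Ẑ ≅ ∏_p ℤ_p` of the integers (e.g. `Gal(Q_ℓ^ur/Q_ℓ)`), and let `M` be a
finite discrete `G`-module.  Then `H²(G, M) = 0` for continuous cohomology: every
continuous 2-cocycle `f : G × G → M` is the coboundary of a continuous 1-cochain. -/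
theorem h2_of_Zhat_vanishes
    {G : Type*} [Group G] [TopologicalSpace G] [IsTopologicalGroup G]
    (e : G ≃* Multiplicative (∀ p : Nat.Primes, ℤ_[(p : ℕ)]))
    (he : Continuous e) (he' : Continuous e.symm)
    {M : Type*} [AddCommGroup M] [Finite M] [TopologicalSpace M] [DiscreteTopology M]
    [DistribMulAction G M] (hact : Continuous fun q : G × M => q.1 • q.2)
    (f : G → G → M) (hf : Continuous fun q : G × G => f q.1 q.2)
    (hcocycle : ∀ σ τ υ : G,
      σ • f τ υ - f (σ * τ) υ + f σ (τ * υ) - f σ τ = 0) :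
    ∃ g : G → M, Continuous g ∧ ∀ σ τ : G, f σ τ = σ • g τ - g (σ * τ) + g σ := by
  classical
  have hcomm : ∀ a b : G, a * b = b * a := fun a b =>
    e.injective (by rw [map_mul, map_mul, mul_comm])
  haveI : CompactSpace (Multiplicative (∀ p : Nat.Primes, ℤ_[(p : ℕ)])) :=
    inferInstanceAs (CompactSpace (∀ p : Nat.Primes, ℤ_[(p : ℕ)]))
  let eh : G ≃ₜ Multiplicative (∀ p : Nat.Primes, ℤ_[(p : ℕ)]) :=
    { toEquiv := e.toEquiv, continuous_toFun := he, continuous_invFun := he' }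
  haveI : CompactSpace G := eh.symm.compactSpace
  haveI : ContinuousAdd M := ⟨continuous_of_discreteTopology⟩
  haveI : Nonempty M := ⟨0⟩
  -- Step 1: uniform local constancy of f
  obtain ⟨V, hVopen, hV1, hVf⟩ : ∃ V : Set G, IsOpen V ∧ (1 : G) ∈ V ∧
      ∀ x y u v : G, u ∈ V → v ∈ V → f (x * u) (y * v) = f x y := by
    have hc1 : Continuous fun q : (G × G) × G × G => f (q.1.1 * q.2.1) (q.1.2 * q.2.2) := by
      have hm : Continuous fun q : (G × G) × G × G => (q.1.1 * q.2.1, q.1.2 * q.2.2) := by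
        fun_prop
      exact hf.comp hm
    have hc2 : Continuous fun q : (G × G) × G × G => f q.1.1 q.1.2 := by
      have hm : Continuous fun q : (G × G) × G × G => (q.1.1, q.1.2) := by fun_prop
      exact hf.comp hm
    have hAopen : IsOpen {q : (G × G) × G × G |
        f (q.1.1 * q.2.1) (q.1.2 * q.2.2) = f q.1.1 q.1.2} := by
      have heq : {q : (G × G) × G × G | f (q.1.1 * q.2.1) (q.1.2 * q.2.2) = f q.1.1 q.1.2}
          = (fun q : (G × G) × G × G =>
              (f (q.1.1 * q.2.1) (q.1.2 * q.2.2), f q.1.1 q.1.2)) ⁻¹' {y | y.1 = y.2} := rfl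
      rw [heq]
      exact (hc1.prodMk hc2).isOpen_preimage _ (isOpen_discrete _)
    have hsub : (Set.univ : Set (G × G)) ×ˢ ({((1 : G), (1 : G))} : Set (G × G)) ⊆
        {q : (G × G) × G × G | f (q.1.1 * q.2.1) (q.1.2 * q.2.2) = f q.1.1 q.1.2} := by
      rintro ⟨⟨x, y⟩, u, v⟩ ⟨-, hm⟩
      simp only [Set.mem_singleton_iff, Prod.mk.injEq] at hm
      obtain ⟨rfl, rfl⟩ := hm
      show f (x * 1) (y * 1) = f x y
      rw [mul_one, mul_one]
    obtain ⟨U', V', hU', hV', hU'mem, hV'mem, hUV⟩ :=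
      generalized_tube_lemma isCompact_univ isCompact_singleton hAopen hsub
    have h11 : ((1 : G), (1 : G)) ∈ V' := hV'mem rfl
    obtain ⟨V₁, V₂, hV₁, hV₂, h1V₁, h1V₂, hV12⟩ := isOpen_prod_iff.mp hV' 1 1 h11
    refine ⟨V₁ ∩ V₂, hV₁.inter hV₂, ⟨h1V₁, h1V₂⟩, ?_⟩
    intro x y u v hu hv
    exact hUV (Set.mk_mem_prod (hU'mem (Set.mem_univ ((x, y) : G × G))) (hV12 (Set.mk_mem_prod hu.1 hv.2)))
  -- Step 2: uniform triviality of the action near 1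
  obtain ⟨Va, hVaopen, hVa1, hVaact⟩ : ∃ Va : Set G, IsOpen Va ∧ (1 : G) ∈ Va ∧
      ∀ u ∈ Va, ∀ m : M, u • m = m := by
    have hc1 : Continuous fun q : M × G => q.2 • q.1 :=
      hact.comp (continuous_snd.prodMk continuous_fst)
    have hBopen : IsOpen {q : M × G | q.2 • q.1 = q.1} := by
      have heq : {q : M × G | q.2 • q.1 = q.1}
          = (fun q : M × G => (q.2 • q.1, q.1)) ⁻¹' {y | y.1 = y.2} := rfl
      rw [heq]
      exact (hc1.prodMk continuous_fst).isOpen_preimage _ (isOpen_discrete _)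
    have hsub : (Set.univ : Set M) ×ˢ ({(1 : G)} : Set G) ⊆
        {q : M × G | q.2 • q.1 = q.1} := by
      rintro ⟨m, u⟩ ⟨-, hm⟩
      simp only [Set.mem_singleton_iff] at hm
      subst hm
      exact one_smul G m
    obtain ⟨U', V', hU', hV', hU'mem, hV'mem, hUV⟩ :=
      generalized_tube_lemma isCompact_univ isCompact_singleton hBopen hsub
    exact ⟨V', hV', hV'mem rfl, fun u hu m => hUV (Set.mk_mem_prod (hU'mem (Set.mem_univ m)) hu)⟩
  set W := V ∩ Va with hWdef
  have hWopen : IsOpen W := hVopen.inter hVaopen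
  have hW1 : (1 : G) ∈ W := ⟨hV1, hVa1⟩
  -- transfer the neighborhood to the product of p-adic integers
  have hWzopen : IsOpen {z : ∀ p : Nat.Primes, ℤ_[(p : ℕ)] |
      e.symm (Multiplicative.ofAdd z) ∈ W} := by
    have hcont : Continuous fun z : ∀ p : Nat.Primes, ℤ_[(p : ℕ)] =>
        e.symm (Multiplicative.ofAdd z) := he'.comp continuous_ofAdd
    exact hWopen.preimage hcont
  have hWz0 : (0 : ∀ p : Nat.Primes, ℤ_[(p : ℕ)]) ∈
      {z : ∀ p : Nat.Primes, ℤ_[(p : ℕ)] | e.symm (Multiplicative.ofAdd z) ∈ W} := by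
    show e.symm (Multiplicative.ofAdd 0) ∈ W
    rw [ofAdd_zero, map_one]
    exact hW1
  obtain ⟨I, uu, huu, hIsub⟩ := isOpen_pi_iff.mp hWzopen 0 hWz0
  have hkk' : ∀ p : Nat.Primes, ∃ k : ℕ, p ∈ I →
      ∀ t : ℤ_[(p : ℕ)], ((p : ℕ) : ℤ_[(p : ℕ)]) ^ k ∣ t → t ∈ uu p := by
    intro p
    by_cases hp : p ∈ I
    · obtain ⟨hopen, hmem⟩ := huu p hp
      obtain ⟨ε, hε, hball⟩ := Metric.isOpen_iff.mp hopen 0 hmem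
      obtain ⟨k, hk⟩ := PadicInt.exists_pow_neg_lt (p : ℕ) hε
      refine ⟨k, fun _ t hdvd => hball ?_⟩
      rw [Metric.mem_ball, dist_eq_norm, sub_zero]
      calc ‖t‖ ≤ ((p : ℕ) : ℝ) ^ (-(k : ℤ)) := by
            rw [PadicInt.norm_le_pow_iff_mem_span_pow, Ideal.mem_span_singleton]
            exact hdvd
        _ < ε := hk
    · exact ⟨0, fun h => absurd h hp⟩
  choose kk hkk using hkk'
  -- the integers n, E
  set E := Nat.card M with hEdef
  have hEpos : 0 < E := Nat.card_pos
  set n : ℕ := ∏ p ∈ I, (p : ℕ) ^ kk p with hndef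
  have hnpos : 0 < n := Finset.prod_pos fun p _ => pow_pos p.2.pos _
  have hn'pos : 0 < n * E := Nat.mul_pos hnpos hEpos
  -- the generator and the coordinate map
  set oneZ : (∀ p : Nat.Primes, ℤ_[(p : ℕ)]) := fun _ => 1 with honeZ
  set σG : G := e.symm (Multiplicative.ofAdd oneZ) with hσGdef
  set φ : G → ∀ p : Nat.Primes, ℤ_[(p : ℕ)] := fun x => Multiplicative.toAdd (e x) with hφdef
  have hφcont : Continuous φ := continuous_toAdd.comp he
  have hφmul : ∀ a b : G, φ (a * b) = φ a + φ b := by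
    intro a b
    simp only [hφdef, map_mul, toAdd_mul]
  have hφinv : ∀ a : G, φ a⁻¹ = -φ a := by
    intro a
    simp only [hφdef, map_inv, toAdd_inv]
  have hφone : φ (1 : G) = 0 := by
    simp only [hφdef, map_one, toAdd_one]
  have hφσ_pow : ∀ (j : ℕ) (p : Nat.Primes), φ (σG ^ j) p = (j : ℤ_[(p : ℕ)]) := by
    intro j p
    have h1 : e (σG ^ j) = Multiplicative.ofAdd oneZ ^ j := by
      rw [map_pow, hσGdef, MulEquiv.apply_symm_apply]
    have h2 : φ (σG ^ j) = j • oneZ := by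
      show Multiplicative.toAdd (e (σG ^ j)) = j • oneZ
      rw [h1, toAdd_pow, toAdd_ofAdd]
    rw [h2, Pi.smul_apply, honeZ, nsmul_eq_mul, mul_one]
  have hφσ_zpow : ∀ (j : ℤ) (p : Nat.Primes), φ (σG ^ j) p = (j : ℤ_[(p : ℕ)]) := by
    intro j p
    have h1 : e (σG ^ j) = Multiplicative.ofAdd oneZ ^ j := by
      rw [map_zpow, hσGdef, MulEquiv.apply_symm_apply]
    have h2 : φ (σG ^ j) = j • oneZ := by
      show Multiplicative.toAdd (e (σG ^ j)) = j • oneZ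
      rw [h1, toAdd_zpow, toAdd_ofAdd]
    rw [h2, Pi.smul_apply, honeZ, zsmul_eq_mul, mul_one]
  -- the auxiliary subgroups
  set K₀G : Set G := {x | ∀ p ∈ I, ((p : ℕ) : ℤ_[(p : ℕ)]) ^ kk p ∣ φ x p} with hK₀Gdef
  set KG : Set G := {x | ∀ p : Nat.Primes,
      ((p : ℕ) : ℤ_[(p : ℕ)]) ^ ((n * E).factorization (p : ℕ)) ∣ φ x p} with hKGdef
  have hK₀W : K₀G ⊆ W := by
    intro x hx
    have hpi : φ x ∈ (I : Set Nat.Primes).pi uu := by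
      intro p hp
      exact hkk p hp (φ x p) (hx p hp)
    have hmem := hIsub hpi
    have hW' : e.symm (Multiplicative.ofAdd (φ x)) ∈ W := hmem
    simpa only [hφdef, ofAdd_toAdd, MulEquiv.symm_apply_apply] using hW'
  have hKsubK₀ : KG ⊆ K₀G := by
    intro x hx p hp
    have h1 : (p : ℕ) ^ kk p ∣ n := by
      rw [hndef]
      exact Finset.dvd_prod_of_mem (fun p : Nat.Primes => (p : ℕ) ^ kk p) hp
    have h2 : (p : ℕ) ^ kk p ∣ n * E := h1.trans (dvd_mul_right n E)
    have h3 : kk p ≤ (n * E).factorization (p : ℕ) :=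
      (Nat.Prime.pow_dvd_iff_le_factorization p.2 hn'pos.ne').mp h2
    exact (pow_dvd_pow _ h3).trans (hx p)
  have hK1 : (1 : G) ∈ KG := by
    intro p
    rw [hφone]
    exact dvd_zero _
  have hKmul : ∀ a b : G, a ∈ KG → b ∈ KG → a * b ∈ KG := by
    intro a b ha hb p
    rw [hφmul]
    exact dvd_add (ha p) (hb p)
  have hKinv : ∀ a : G, a ∈ KG → a⁻¹ ∈ KG := by
    intro a ha p
    rw [hφinv]
    exact (dvd_neg).mpr (ha p)
  have hσn : σG ^ n ∈ K₀G := by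
    intro p hp
    have h1 : (p : ℕ) ^ kk p ∣ n := by
      rw [hndef]
      exact Finset.dvd_prod_of_mem (fun p : Nat.Primes => (p : ℕ) ^ kk p) hp
    have h2 := map_dvd (Nat.castRingHom ℤ_[(p : ℕ)]) h1
    rw [hφσ_pow]
    simpa using h2
  have hKdiv : ∀ i : ℤ, σG ^ i ∈ KG → ((n * E : ℕ) : ℤ) ∣ i := by
    intro i hi
    rcases eq_or_ne i 0 with rfl | hi0
    · exact dvd_zero _
    rw [Int.natCast_dvd]
    have hNA : i.natAbs ≠ 0 := Int.natAbs_ne_zero.mpr hi0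
    rw [← Nat.factorization_le_iff_dvd hn'pos.ne' hNA]
    rw [Finsupp.le_def]
    intro q
    by_cases hq : q ∈ (n * E).factorization.support
    · have hqmem : q ∈ (n * E).primeFactors := by
        rwa [← Nat.support_factorization]
      have hqp : q.Prime := Nat.prime_of_mem_primeFactors hqmem
      have h1 := hi ⟨q, hqp⟩
      erw [hφσ_zpow] at h1
      rw [dvd_pow_int_iff] at h1
      have h2 : q ^ ((n * E).factorization q) ∣ i.natAbs := by
        rw [← Int.natCast_dvd]
        push_cast
        exact h1
      exact (Nat.Prime.pow_dvd_iff_le_factorization hqp hNA).mp h2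
    · rw [Finsupp.notMem_support_iff.mp hq]
      exact Nat.zero_le _
  have hKopen : IsOpen KG := by
    have hKZ : IsOpen {z : ∀ p : Nat.Primes, ℤ_[(p : ℕ)] | ∀ p : Nat.Primes,
        ((p : ℕ) : ℤ_[(p : ℕ)]) ^ ((n * E).factorization (p : ℕ)) ∣ z p} := by
      have heq : {z : ∀ p : Nat.Primes, ℤ_[(p : ℕ)] | ∀ p : Nat.Primes,
          ((p : ℕ) : ℤ_[(p : ℕ)]) ^ ((n * E).factorization (p : ℕ)) ∣ z p}
          = Set.pi {p : Nat.Primes | (p : ℕ) ∈ (n * E).primeFactors}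
            (fun p => {t : ℤ_[(p : ℕ)] |
              ((p : ℕ) : ℤ_[(p : ℕ)]) ^ ((n * E).factorization (p : ℕ)) ∣ t}) := by
        ext z
        constructor
        · intro hz p _
          exact hz p
        · intro hz p
          by_cases hp : (p : ℕ) ∈ (n * E).primeFactors
          · exact hz p hp
          · have hzero : (n * E).factorization (p : ℕ) = 0 := by
              rw [← Nat.support_factorization] at hp
              exact Finsupp.notMem_support_iff.mp hp
            rw [hzero, pow_zero]
            exact one_dvd _
      rw [heq]
      apply isOpen_set_pi
      · exact Set.Finite.preimage
          (Set.injOn_of_injective (fun a b hab => Subtype.ext hab))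
          (n * E).primeFactors.finite_toSet
      · intro p _
        exact dvd_pow_isOpen (p : ℕ) _
    exact hKZ.preimage hφcont
  -- the residue function r
  set J : Finset Nat.Primes := (n * E).primeFactors.attach.image
      (fun q => (⟨q.1, Nat.prime_of_mem_primeFactors q.2⟩ : Nat.Primes)) with hJdef
  have hJmem : ∀ p : Nat.Primes, (p : ℕ) ∈ (n * E).primeFactors → p ∈ J := by
    intro p hp
    rw [hJdef]
    exact Finset.mem_image.mpr ⟨⟨(p : ℕ), hp⟩, Finset.mem_attach _ _, Subtype.ext rfl⟩
  have hrex : ∀ x : G, ∃ i : ℕ, (σG ^ i)⁻¹ * x ∈ KG := by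
    intro x
    obtain ⟨i, hi⟩ := crt_approx J (fun p => (n * E).factorization (p : ℕ)) (φ x)
    refine ⟨i, ?_⟩
    intro p
    have hval : φ ((σG ^ i)⁻¹ * x) p = φ x p - (i : ℤ_[(p : ℕ)]) := by
      rw [hφmul, hφinv]
      have happ : (-φ (σG ^ i) + φ x) p = -φ (σG ^ i) p + φ x p := rfl
      rw [happ, hφσ_pow]
      ring
    rw [hval]
    by_cases hp : (p : ℕ) ∈ (n * E).primeFactors
    · exact hi p (hJmem p hp)
    · have hzero : (n * E).factorization (p : ℕ) = 0 := by
        rw [← Nat.support_factorization] at hp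
        exact Finsupp.notMem_support_iff.mp hp
      rw [hzero, pow_zero]
      exact one_dvd _
  choose rG hrG using hrex
  -- invoke the core lemma
  exact core_lemma hact hcomm f hcocycle σG n E
    (fun m => by rw [hEdef]; exact card_nsmul_eq_zero')
    K₀G KG
    (fun x y u v hu hv => hVf x y u v (hK₀W hu).1 (hK₀W hv).1)
    (fun u hu m => hVaact u (hK₀W hu).2 m)
    hσn hKsubK₀ hK1 hKmul hKinv hKdiv hKopen rG hrG
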